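/- In a matching-covered graph G with at least two edges, every singleton edge set {e} is feasible. -/
import Mathlib


open SimpleGraph

variable {V : Type*}

/-- The edge cut `∇_G(U)`: edges of `G` with exactly one endpoint in `U`. -/
def edgeCut (G : SimpleGraph V) (U : Set V) : Set (Sym2 V) :=
  {e | e ∈ G.edgeSet ∧ ∃ x y, e = s(x, y) ∧ x ∈ U ∧ y ∉ U}

/-- Switching-equivalence of edge sets in `G`: `X = Y ⊕ ∇_G(V₀)` for some `V₀`. -/
def SwEquiv (G : SimpleGraph V) (X Y : Set (Sym2 V)) : Prop :=
  ∃ U : Set V, X = symmDiff Y (edgeCut G U)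

/-- A feasible edge set: two perfect matchings meeting `X` with different parities. -/
def Feasible (G : SimpleGraph V) (X : Set (Sym2 V)) : Prop :=
  ∃ M₁ M₂ : G.Subgraph, M₁.IsPerfectMatching ∧ M₂.IsPerfectMatching ∧
    (M₁.edgeSet ∩ X).ncard % 2 ≠ (M₂.edgeSet ∩ X).ncard % 2

/-- A matching-covered graph: connected and every edge lies in a perfect matching. -/
def MatchingCovered (G : SimpleGraph V) : Prop :=
  G.Connected ∧ ∀ e ∈ G.edgeSet, ∃ M : G.Subgraph, M.IsPerfectMatching ∧ e ∈ M.edgeSet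

/-- in a matching-covered graph with at least two edges,
every singleton edge set is feasible. -/
theorem stmt8 [Fintype V] {G : SimpleGraph V} (hG : MatchingCovered G)
    (hE : 2 ≤ G.edgeSet.ncard) {e : Sym2 V} (he : e ∈ G.edgeSet) :
    Feasible G {e} := by
  obtain ⟨hconn, hcov⟩ := hG
  induction e using Sym2.ind with
  | _ a b =>
  rw [mem_edgeSet] at he
  -- there is an edge sharing an endpoint with (a,b)
  have hex : ∃ v, (G.Adj a v ∧ v ≠ b) ∨ (G.Adj b v ∧ v ≠ a) := by
    by_contra hno
    push_neg at hno
    have hna : ∀ v, G.Adj a v → v = b := fun v => (hno v).1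
    have hnb : ∀ v, G.Adj b v → v = a := fun v => (hno v).2
    obtain ⟨f, hf, hfe⟩ :=
      Set.exists_ne_of_one_lt_ncard (show 1 < G.edgeSet.ncard by omega) s(a, b)
    induction f using Sym2.ind with
    | _ c d =>
    rw [mem_edgeSet] at hf
    have hc1 : c ≠ a := by
      rintro rfl
      exact hfe (by rw [hna d hf])
    have hc2 : c ≠ b := by
      rintro rfl
      rw [hnb d hf] at hfe
      exact hfe Sym2.eq_swap
    have key : ∀ {x y : V} (_ : G.Walk x y), (x = a ∨ x = b) → (y = a ∨ y = b) := by
      intro x y p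
      induction p with
      | nil => exact id
      | cons h q ih =>
        rintro (rfl | rfl)
        · exact ih (Or.inr (hna _ h))
        · exact ih (Or.inl (hnb _ h))
    obtain ⟨p⟩ := hconn a c
    rcases key p (Or.inl rfl) with rfl | rfl
    · exact hc1 rfl
    · exact hc2 rfl
  -- a perfect matching avoiding s(a,b)
  have h2 : ∃ M₂ : G.Subgraph, M₂.IsPerfectMatching ∧ s(a, b) ∉ M₂.edgeSet := by
    obtain ⟨v, ⟨hav, hvb⟩ | ⟨hbv, hva⟩⟩ := hex
    · obtain ⟨M₂, hM₂, hmem⟩ := hcov s(a, v) ((mem_edgeSet G).mpr hav)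
      refine ⟨M₂, hM₂, fun hab => ?_⟩
      rw [Subgraph.mem_edgeSet] at hmem hab
      exact hvb ((hM₂.1 (hM₂.2 a)).unique hmem hab)
    · obtain ⟨M₂, hM₂, hmem⟩ := hcov s(b, v) ((mem_edgeSet G).mpr hbv)
      refine ⟨M₂, hM₂, fun hab => ?_⟩
      rw [Subgraph.mem_edgeSet] at hmem hab
      exact hva ((hM₂.1 (hM₂.2 b)).unique hmem hab.symm)
  obtain ⟨M₂, hM₂, hM₂e⟩ := h2
  obtain ⟨M₁, hM₁, hM₁e⟩ := hcov s(a, b) ((mem_edgeSet G).mpr he)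
  refine ⟨M₁, M₂, hM₁, hM₂, ?_⟩
  have e1 : M₁.edgeSet ∩ {s(a, b)} = {s(a, b)} :=
    Set.inter_eq_right.mpr (Set.singleton_subset_iff.mpr hM₁e)
  have e2 : M₂.edgeSet ∩ {s(a, b)} = ∅ := by
    ext f
    simp only [Set.mem_inter_iff, Set.mem_singleton_iff, Set.mem_empty_iff_false, iff_false]
    rintro ⟨hf, rfl⟩
    exact hM₂e hf
  rw [e1, e2]
  simp
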